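/- Gautschi's inequality: for every real x > 0 and s ∈ (0,1), x^{1-s} < Γ(x+1)/Γ(x+s) < (x+1)^{1-s}. -/
import Mathlib

open Real

/-- Key consequence of log-convexity: `Γ(y+1) ≤ (y+t)^(1-t) * Γ(y+t)`. -/
lemma gautschi_key (y t : ℝ) (hy : 0 < y) (ht : 0 < t) (ht1 : t < 1) :
    Real.Gamma (y + 1) ≤ (y + t) ^ (1 - t) * Real.Gamma (y + t) := by
  have hyt : 0 < y + t := by linarith
  have h := Real.Gamma_mul_add_mul_le_rpow_Gamma_mul_rpow_Gamma
    (s := y + t) (t := y + t + 1) hyt (by linarith) ht (by linarith)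
    (by ring : t + (1 - t) = 1)
  have harg : t * (y + t) + (1 - t) * (y + t + 1) = y + 1 := by ring
  rw [harg, Real.Gamma_add_one hyt.ne'] at h
  calc Real.Gamma (y + 1)
      ≤ Real.Gamma (y + t) ^ t * ((y + t) * Real.Gamma (y + t)) ^ (1 - t) := h
    _ = (y + t) ^ (1 - t) * Real.Gamma (y + t) := by
        rw [Real.mul_rpow hyt.le (Real.Gamma_pos_of_pos hyt).le,
          ← mul_assoc, mul_comm (Real.Gamma (y + t) ^ t), mul_assoc,
          ← Real.rpow_add (Real.Gamma_pos_of_pos hyt), add_sub_cancel,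
          Real.rpow_one]

theorem gautschi_inequality (x s : ℝ) (hx : 0 < x) (hs : s ∈ Set.Ioo (0:ℝ) 1) :
    x ^ (1 - s) < Real.Gamma (x + 1) / Real.Gamma (x + s) ∧
    Real.Gamma (x + 1) / Real.Gamma (x + s) < (x + 1) ^ (1 - s) := by
  obtain ⟨hs0, hs1⟩ := hs
  have hxs : 0 < x + s := by linarith
  have hG : 0 < Real.Gamma (x + s) := Real.Gamma_pos_of_pos hxs
  have hG1 : 0 < Real.Gamma (x + 1) := Real.Gamma_pos_of_pos (by linarith)
  constructor
  · -- lower bound: use key lemma at `y = x + s`, `t = 1 - s`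
    have h := gautschi_key (x + s) (1 - s) hxs (by linarith) (by linarith)
    rw [show x + s + (1 - s) = x + 1 by ring,
      show (1 : ℝ) - (1 - s) = s by ring,
      Real.Gamma_add_one hxs.ne'] at h
    -- h : (x+s) * Γ(x+s) ≤ (x+1)^s * Γ(x+1)
    -- strict AM-GM: x^(1-s) * (x+1)^s < x + s
    have hamgm : x ^ (1 - s) * (x + 1) ^ s < x + s := by
      have hlog := strictConcaveOn_log_Ioi.2 (Set.mem_Ioi.2 hx)
        (Set.mem_Ioi.2 (by linarith : (0:ℝ) < x + 1))
        (by linarith : x ≠ x + 1) (by linarith : 0 < 1 - s) hs0 (by ring)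
      have h1 : x ^ (1 - s) * (x + 1) ^ s
          = Real.exp ((1 - s) * Real.log x + s * Real.log (x + 1)) := by
        rw [Real.exp_add, Real.rpow_def_of_pos hx, Real.rpow_def_of_pos (by linarith),
          mul_comm (Real.log x), mul_comm (Real.log (x + 1))]
      rw [h1]
      calc Real.exp ((1 - s) * Real.log x + s * Real.log (x + 1))
          < Real.exp (Real.log ((1 - s) • x + s • (x + 1))) := by
            apply Real.exp_lt_exp.2
            simpa [smul_eq_mul] using hlog
        _ = x + s := by
            rw [Real.exp_log (by simp only [smul_eq_mul]; nlinarith)]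
            simp only [smul_eq_mul]; ring
    have hpow : (0:ℝ) < (x + 1) ^ s := Real.rpow_pos_of_pos (by linarith) s
    rw [lt_div_iff₀ hG]
    -- goal : x^(1-s) * Γ(x+s) < Γ(x+1)
    have h2 : x ^ (1 - s) * Real.Gamma (x + s) * (x + 1) ^ s
        < (x + s) * Real.Gamma (x + s) := by
      have := mul_lt_mul_of_pos_right hamgm hG
      nlinarith
    have h3 : x ^ (1 - s) * Real.Gamma (x + s) * (x + 1) ^ s
        < (x + 1) ^ s * Real.Gamma (x + 1) := lt_of_lt_of_le h2 h
    nlinarith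
  · -- upper bound
    have h := gautschi_key x s hx hs0 hs1
    have hlt : (x + s) ^ (1 - s) < (x + 1) ^ (1 - s) :=
      Real.rpow_lt_rpow hxs.le (by linarith) (by linarith)
    rw [div_lt_iff₀ hG]
    calc Real.Gamma (x + 1) ≤ (x + s) ^ (1 - s) * Real.Gamma (x + s) := h
      _ < (x + 1) ^ (1 - s) * Real.Gamma (x + s) :=
          mul_lt_mul_of_pos_right hlt hG
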